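/- If X is an exponentially distributed random variable with rate parameter 1/r (mean r > 0), κ > 0, and a > 0, then E[X / (κ X + a)] = (1/κ)(1 − (a/(κ r)) e^{a/(κ r)} E₁(a/(κ r))), where E₁(x) = ∫₁^∞ e^{−t x}/t dt is the exponential integral. -/

import Mathlib

open MeasureTheory

/-- The exponential integral `E₁(x) = ∫₁^∞ e^{−tx}/t dt`. -/
noncomputable def expInt (x : ℝ) : ℝ := ∫ t in Set.Ici (1 : ℝ), Real.exp (-(t * x)) / t

open Set Real

lemma shiftIoi (f : ℝ → ℝ) (c d : ℝ) :
    ∫ x in Set.Ioi c, f (x + d) = ∫ x in Set.Ioi (c + d), f x := by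
  have h := (measurePreserving_add_right (volume : Measure ℝ) d).setIntegral_preimage_emb
    (MeasurableEquiv.addRight d).measurableEmbedding f (Set.Ioi (c + d))
  simpa [Set.preimage_add_const_Ioi] using h

lemma expInt_eq (b : ℝ) (hb : 0 < b) :
    expInt b = ∫ s in Set.Ioi b, Real.exp (-s) / s := by
  have h := integral_comp_mul_right_Ioi (fun s => b * (Real.exp (-s) / s)) 1 hb
  simp only [smul_eq_mul, one_mul] at h
  unfold expInt
  calc ∫ t in Set.Ici (1:ℝ), Real.exp (-(t * b)) / t
      = ∫ t in Set.Ici (1:ℝ), b * (Real.exp (-(t * b)) / (t * b)) := by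
        refine setIntegral_congr_fun measurableSet_Ici (fun t ht => ?_)
        have ht0 : t ≠ 0 := by
          have : (1:ℝ) ≤ t := ht
          linarith
        field_simp
    _ = b⁻¹ * ∫ s in Set.Ici b, b * (Real.exp (-s) / s) := by
        rw [integral_Ici_eq_integral_Ioi, integral_Ici_eq_integral_Ioi]; exact h
    _ = ∫ s in Set.Ici b, Real.exp (-s) / s := by
        rw [← integral_const_mul]
        refine setIntegral_congr_fun measurableSet_Ici (fun s _ => ?_)
        field_simp
    _ = ∫ s in Set.Ioi b, Real.exp (-s) / s := integral_Ici_eq_integral_Ioi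

lemma step4 (b : ℝ) (hb : 0 < b) :
    ∫ u in Set.Ioi (0:ℝ), Real.exp (-u) / (u + b)
      = Real.exp b * ∫ s in Set.Ioi b, Real.exp (-s) / s := by
  have h := shiftIoi (fun s => Real.exp (-s) * Real.exp b / s) 0 b
  rw [zero_add] at h
  calc ∫ u in Set.Ioi (0:ℝ), Real.exp (-u) / (u + b)
      = ∫ u in Set.Ioi (0:ℝ), Real.exp (-(u + b)) * Real.exp b / (u + b) := by
        refine setIntegral_congr_fun measurableSet_Ioi (fun u _ => ?_)
        rw [neg_add, Real.exp_add, mul_assoc, ← Real.exp_add]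
        simp
    _ = ∫ s in Set.Ioi b, Real.exp (-s) * Real.exp b / s := h
    _ = Real.exp b * ∫ s in Set.Ioi b, Real.exp (-s) / s := by
        rw [← integral_const_mul]
        refine setIntegral_congr_fun measurableSet_Ioi (fun s _ => ?_)
        ring

lemma integrable_exp_neg_Ioi : IntegrableOn (fun u : ℝ => Real.exp (-u)) (Set.Ioi 0) := by
  have := exp_neg_integrableOn_Ioi (0:ℝ) (one_pos)
  simpa using this

lemma integrable_frac (b : ℝ) (hb : 0 < b) :
    IntegrableOn (fun u : ℝ => b * (Real.exp (-u) / (u + b))) (Set.Ioi 0) := by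
  refine Integrable.mono' integrable_exp_neg_Ioi ?_ ?_
  · apply Measurable.aestronglyMeasurable
    fun_prop
  · filter_upwards [ae_restrict_mem measurableSet_Ioi] with u hu
    have hu0 : (0:ℝ) < u := hu
    have hub : 0 < u + b := by linarith
    rw [Real.norm_eq_abs, abs_of_nonneg (by positivity)]
    rw [mul_div_assoc'] at *
    rw [div_le_iff₀ hub]
    have : b ≤ u + b := by linarith
    calc b * Real.exp (-u) ≤ (u+b) * Real.exp (-u) := by
          exact mul_le_mul_of_nonneg_right this (Real.exp_pos _).le
      _ = Real.exp (-u) * (u+b) := by ring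

/-- if `X` is exponential with mean `r > 0` (density
`(1/r)e^{−x/r}` on `(0,∞)`), `κ > 0` and `a > 0`, then
`E[X/(κX+a)] = (1/κ)(1 − (a/(κr)) e^{a/(κr)} E₁(a/(κr)))`. -/
theorem exponential_expectation_expInt (r κ a : ℝ) (hr : 0 < r) (hκ : 0 < κ) (ha : 0 < a) :
    ∫ x in Set.Ioi (0 : ℝ), (x / (κ * x + a)) * ((1 / r) * Real.exp (-(x / r)))
      = (1 / κ) * (1 - (a / (κ * r)) * Real.exp (a / (κ * r)) * expInt (a / (κ * r))) := by
  set b := a / (κ * r) with hbdef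
  have hb : 0 < b := by positivity
  have hsub := integral_comp_mul_left_Ioi
    (fun x => (x / (κ * x + a)) * ((1 / r) * Real.exp (-(x / r)))) 0 hr
  simp only [mul_zero, smul_eq_mul] at hsub
  have hflip : ∫ x in Set.Ioi (0:ℝ), (x / (κ * x + a)) * ((1 / r) * Real.exp (-(x / r)))
      = r * ∫ u in Set.Ioi (0:ℝ),
        (r * u / (κ * (r * u) + a)) * ((1 / r) * Real.exp (-(r * u / r))) := by
    rw [hsub]
    field_simp
    congr 1
    ext x
    ring
  rw [hflip]
  have key : ∫ u in Set.Ioi (0:ℝ),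
      (r * u / (κ * (r * u) + a)) * ((1 / r) * Real.exp (-(r * u / r)))
      = ∫ u in Set.Ioi (0:ℝ),
        (1/r) * ((1/κ) * (Real.exp (-u) - b * (Real.exp (-u) / (u + b)))) := by
    refine setIntegral_congr_fun measurableSet_Ioi (fun u hu => ?_)
    have hu0 : (0:ℝ) < u := hu
    have hub : 0 < u + b := by linarith
    have hden : 0 < κ * (r * u) + a := by positivity
    have hrr : r * u / r = u := by field_simp
    rw [hrr]
    have h1 : r * u / (κ * (r * u) + a) = (1/κ) * (1 - b * (1 / (u + b))) := by
      rw [hbdef]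
      field_simp
      ring
    rw [h1]
    field_simp
  rw [key, integral_const_mul, integral_const_mul,
    integral_sub integrable_exp_neg_Ioi (integrable_frac b hb),
    integral_exp_neg_Ioi_zero, integral_const_mul, step4 b hb, expInt_eq b hb]
  field_simp
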